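/- If Σ_x is symmetric positive definite, Σ_x̃ = Σ_x + σ² I, and the ordinary (uncorrected) Langevin iteration with the noisy score is run (i.e., the fixed point is Σ* = Σ_x̃ (I − (μ/2) Σ_x̃⁻¹)⁻¹), then with step size μ = σ²/2 the leading-order bias satisfies Σ* = Σ_x + (5μ/2) I + O(μ²), exactly five times the bias of the noise-corrected algorithm. -/

import Mathlib

open scoped Matrix.Norms.L2Operator

lemma inv_one_sub_norm_le_aux {k : ℕ} (x : Matrix (Fin k) (Fin k) ℝ) (h : ‖x‖ ≤ 1/2) :
    ‖(1 - x)⁻¹‖ ≤ ‖(1 : Matrix (Fin k) (Fin k) ℝ)‖ + 1 := by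
  have h1 : ‖x‖ < 1 := h.trans_lt (by norm_num)
  rw [Matrix.nonsing_inv_eq_ringInverse, ← geom_series_eq_inverse x h1]
  have h2 := tsum_geometric_le_of_norm_lt_one x h1
  have h3 : (1 - ‖x‖)⁻¹ ≤ 2 := by
    rw [show (2:ℝ) = (1/2:ℝ)⁻¹ by norm_num]
    exact inv_anti₀ (by norm_num) (by linarith)
  linarith

set_option maxHeartbeats 1000000 in
/-- Bias of the misspecified ordinary Langevin algorithm (noisy score, σ² = 2μ):
Σ* = Σ_x + (5μ/2)I + O(μ²), five times the bias of the noise-corrected algorithm. -/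
theorem misspecified_langevin_gaussian_bias (k : ℕ)
    (Sx : Matrix (Fin k) (Fin k) ℝ) (hS : Sx.PosDef) :
    ∃ C > 0, ∃ μ₀ > 0, ∀ μ : ℝ, 0 < μ → μ < μ₀ →
      ‖(Sx + (2 * μ) • 1) * (1 - (μ / 2) • (Sx + (2 * μ) • (1 : Matrix (Fin k) (Fin k) ℝ))⁻¹)⁻¹
          - Sx - (5 * μ / 2) • 1‖ ≤ C * μ ^ 2 := by
  have hdet : IsUnit Sx.det := isUnit_iff_ne_zero.mpr hS.det_pos.ne'
  set T : Matrix (Fin k) (Fin k) ℝ := Sx⁻¹ with hT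
  set N : ℝ := ‖T‖ with hNdef
  set K1 : ℝ := ‖(1 : Matrix (Fin k) (Fin k) ℝ)‖ + 1 with hK1def
  have hN : 0 ≤ N := norm_nonneg _
  have hK1 : 1 ≤ K1 := by
    have := norm_nonneg (1 : Matrix (Fin k) (Fin k) ℝ); linarith
  refine ⟨K1 * K1 * N / 4 + 1, by nlinarith,
    min ((4 * N + 2)⁻¹) ((2 * (K1 * N) + 2)⁻¹),
    lt_min (by apply inv_pos.mpr; linarith) (by apply inv_pos.mpr; nlinarith), ?_⟩
  intro μ hμ hμ₀
  have hμ1 : μ < (4 * N + 2)⁻¹ := hμ₀.trans_le (min_le_left _ _)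
  have hμ2 : μ < (2 * (K1 * N) + 2)⁻¹ := hμ₀.trans_le (min_le_right _ _)
  have hd1 : (0:ℝ) < 4 * N + 2 := by linarith
  have hd2 : (0:ℝ) < 2 * (K1 * N) + 2 := by nlinarith
  have hμ1' : μ * (4 * N + 2) < 1 := by
    have := mul_lt_mul_of_pos_right hμ1 hd1
    rwa [inv_mul_cancel₀ hd1.ne'] at this
  have hμ2' : μ * (2 * (K1 * N) + 2) < 1 := by
    have := mul_lt_mul_of_pos_right hμ2 hd2
    rwa [inv_mul_cancel₀ hd2.ne'] at this
  set A := Sx + (2 * μ) • (1 : Matrix (Fin k) (Fin k) ℝ) with hA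
  have hAfact : A = Sx * (1 + (2 * μ) • T) := by
    rw [hA, mul_add, Matrix.mul_smul, mul_one, hT, Matrix.mul_nonsing_inv _ hdet]
  have hxnorm : ‖-((2 * μ) • T)‖ ≤ 1 / 2 := by
    rw [norm_neg, norm_smul, Real.norm_eq_abs, abs_of_pos (by positivity)]
    nlinarith
  have hUnorm : ‖(1 + (2 * μ) • T)⁻¹‖ ≤ K1 := by
    have := inv_one_sub_norm_le_aux (-((2 * μ) • T)) hxnorm
    rwa [sub_neg_eq_add] at this
  have hUunit : IsUnit (1 + (2 * μ) • T) := by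
    have := isUnit_one_sub_of_norm_lt_one (x := -((2 * μ) • T))
      (hxnorm.trans_lt (by norm_num))
    rwa [sub_neg_eq_add] at this
  have hAdet : IsUnit A.det := by
    rw [hAfact, Matrix.det_mul]
    exact hdet.mul ((Matrix.isUnit_iff_isUnit_det _).mp hUunit)
  have hAinvnorm : ‖A⁻¹‖ ≤ K1 * N := by
    rw [hAfact, Matrix.mul_inv_rev, ← hT]
    exact le_trans (norm_mul_le _ _)
      (mul_le_mul hUnorm le_rfl (norm_nonneg _) (by linarith))
  set B := (1 - (μ / 2) • A⁻¹)⁻¹ with hB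
  have hynorm : ‖(μ / 2) • A⁻¹‖ ≤ 1 / 2 := by
    rw [norm_smul, Real.norm_eq_abs, abs_of_pos (by positivity)]
    nlinarith [norm_nonneg A⁻¹]
  have hBnorm : ‖B‖ ≤ K1 := inv_one_sub_norm_le_aux _ hynorm
  have hVunit : IsUnit (1 - (μ / 2) • A⁻¹) :=
    isUnit_one_sub_of_norm_lt_one (hynorm.trans_lt (by norm_num))
  have hVdet := (Matrix.isUnit_iff_isUnit_det _).mp hVunit
  have hVB : (1 - (μ / 2) • A⁻¹) * B = 1 := Matrix.mul_nonsing_inv _ hVdet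
  have h1 : A * (1 - (μ / 2) • A⁻¹) = A - (μ / 2) • 1 := by
    rw [mul_sub, mul_one, Matrix.mul_smul, Matrix.mul_nonsing_inv _ hAdet]
  have hAB : A * B = A + (μ / 2) • B := by
    calc A * B = (A - (μ / 2) • 1 + (μ / 2) • 1) * B := by rw [sub_add_cancel]
      _ = A * (1 - (μ / 2) • A⁻¹) * B + (μ / 2) • B := by
          rw [h1, add_mul, Matrix.smul_mul, one_mul]
      _ = A + (μ / 2) • B := by rw [mul_assoc, hVB, mul_one]
  have hB1 : B - 1 = (μ / 2) • (A⁻¹ * B) := by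
    calc B - 1 = 1 * B - (1 - (μ / 2) • A⁻¹) * B := by rw [one_mul, hVB]
      _ = (μ / 2) • (A⁻¹ * B) := by rw [← sub_mul, sub_sub_cancel, Matrix.smul_mul]
  have hE : A * B - Sx - (5 * μ / 2) • 1 = (μ ^ 2 / 4) • (A⁻¹ * B) := by
    have hmid : A + (μ / 2) • B - Sx - (5 * μ / 2) • (1 : Matrix (Fin k) (Fin k) ℝ)
        = (μ / 2) • (B - 1) := by
      rw [hA]; module
    rw [hAB, hmid, hB1, smul_smul]
    congr 1; ring
  rw [hE, norm_smul, Real.norm_eq_abs, abs_of_pos (by positivity)]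
  have hn : ‖A⁻¹ * B‖ ≤ (K1 * N) * K1 :=
    le_trans (norm_mul_le _ _)
      (mul_le_mul hAinvnorm hBnorm (norm_nonneg _) (by positivity))
  calc μ ^ 2 / 4 * ‖A⁻¹ * B‖ ≤ μ ^ 2 / 4 * ((K1 * N) * K1) := by
        exact mul_le_mul_of_nonneg_left hn (by positivity)
    _ ≤ (K1 * K1 * N / 4 + 1) * μ ^ 2 := by nlinarith [sq_nonneg μ]
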